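/- arXiv:2003.06196 — 4 statements merged into one kernel-verified Lean document; each statement's English description precedes it below -/
import Mathlib

section
/- (Theorem 3.2: BIBO stability of neutral systems with time-varying delays.) Let M_inf, M_inf^d, M_inf^nom, M_inf^nomd ≥ 0 be constants such that for every bounded w : ℝ → ℂ^n and every neutral auxiliary solution z with input w for which z and ż are bounded, one has ‖z‖_∞ ≤ M_inf·‖w‖_∞ and ‖ż‖_∞ ≤ M_inf^d·‖w‖_∞. Set M'' = M_inf^d·( Σ_{j=1}^J μ_j‖A_j‖ + 2·Σ_{ℓ=1}^L ‖A_{−ℓ}‖ ). Assume M'' < 1 and M_inf·ε·‖h‖_∞·( 1 + ( Σ_j μ_j‖A_j‖ + 2·Σ_ℓ ‖A_{−ℓ}‖ )·M_inf^d·(1−M'')^{-1} ) < 1. Then there exists C ≥ 0, depending only on the data, such that for every bounded input u vanishing on (−∞,0], every neutral nominal solution v for u with ‖v‖_∞ ≤ M_inf^nom·‖u‖_∞ and ‖v̇‖_∞ ≤ M_inf^nomd·‖u‖_∞, and every solution x of the neutral time-varying system for u such that x and ẋ are bounded, one has ‖x‖_∞ ≤ C·‖u‖_∞. -/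
open MeasureTheory

/-- The supremum norm over `t > 0`. -/
noncomputable def supNorm {E : Type*} [NormedAddCommGroup E] (f : ℝ → E) : ℝ :=
  ⨆ t : Set.Ioi (0 : ℝ), ‖f (t : ℝ)‖

/-- A function `ℝ → E` is bounded. -/
def IsBddFun {E : Type*} [NormedAddCommGroup E] (f : ℝ → E) : Prop :=
  ∃ C, ∀ t, ‖f t‖ ≤ C

lemma bddAbove_aux {E : Type*} [NormedAddCommGroup E] {f : ℝ → E} (hf : IsBddFun f) :
    BddAbove (Set.range fun t : Set.Ioi (0:ℝ) => ‖f (t:ℝ)‖) := by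
  obtain ⟨C, hC⟩ := hf
  exact ⟨C, by rintro _ ⟨t, rfl⟩; exact hC t⟩

lemma supNorm_nonneg {E : Type*} [NormedAddCommGroup E] (f : ℝ → E) : 0 ≤ supNorm f := by
  by_cases hb : BddAbove (Set.range fun t : Set.Ioi (0:ℝ) => ‖f (t:ℝ)‖)
  · exact le_trans (norm_nonneg (f 1)) (le_ciSup hb ⟨1, by norm_num⟩)
  · simp only [supNorm]
    rw [Real.iSup_of_not_bddAbove hb]

lemma norm_le_supNorm {E : Type*} [NormedAddCommGroup E] {f : ℝ → E} (hf : IsBddFun f)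
    (h0 : ∀ t ≤ (0:ℝ), f t = 0) (s : ℝ) : ‖f s‖ ≤ supNorm f := by
  rcases le_or_gt s 0 with hs | hs
  · rw [h0 s hs]; simpa using supNorm_nonneg f
  · exact le_ciSup (bddAbove_aux hf) (⟨s, hs⟩ : Set.Ioi (0:ℝ))

lemma supNorm_le {E : Type*} [NormedAddCommGroup E] {f : ℝ → E} {C : ℝ}
    (hb : ∀ t > (0:ℝ), ‖f t‖ ≤ C) : supNorm f ≤ C := by
  haveI : Nonempty (Set.Ioi (0:ℝ)) := ⟨⟨1, by norm_num⟩⟩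
  exact ciSup_le fun t => hb t t.2

lemma norm_add4_le {E : Type*} [NormedAddCommGroup E] (a b c d : E) :
    ‖a + b + c + d‖ ≤ ‖a‖ + ‖b‖ + ‖c‖ + ‖d‖ :=
  (norm_add_le _ _).trans (add_le_add ((norm_add_le _ _).trans
    (add_le_add (norm_add_le _ _) le_rfl)) le_rfl)

lemma norm_sub5_le {E : Type*} [NormedAddCommGroup E] (a b c d e : E) :
    ‖a + b - c - d - e‖ ≤ ‖a‖ + ‖b‖ + ‖c‖ + ‖d‖ + ‖e‖ :=
  (norm_sub_le _ _).trans (add_le_add ((norm_sub_le _ _).trans (add_le_add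
    ((norm_sub_le _ _).trans (add_le_add (norm_add_le _ _) le_rfl)) le_rfl)) le_rfl)

set_option maxHeartbeats 1000000 in
/-- (Theorem 3.2: BIBO stability of neutral systems with time-varying delays.) -/
theorem stmt_3 (n p J K L : ℕ)
    (A : EuclideanSpace ℂ (Fin n) →L[ℂ] EuclideanSpace ℂ (Fin n))
    (Aj : Fin J → EuclideanSpace ℂ (Fin n) →L[ℂ] EuclideanSpace ℂ (Fin n))
    (Am : Fin L → EuclideanSpace ℂ (Fin n) →L[ℂ] EuclideanSpace ℂ (Fin n))
    (B : EuclideanSpace ℂ (Fin p) →L[ℂ] EuclideanSpace ℂ (Fin n))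
    (Bk : Fin K → EuclideanSpace ℂ (Fin p) →L[ℂ] EuclideanSpace ℂ (Fin n))
    -- Hypothesis (H)
    (hH : ∑ ℓ : Fin L, ‖Am ℓ‖ < 1)
    (D ε : ℝ) (hε0 : 0 ≤ ε) (hεD : ε ≤ D)
    (hd μ : Fin J → ℝ) (hμ0 : ∀ j, 0 ≤ μ j) (hμh : ∀ j, μ j ≤ hd j)
    (T ν : Fin K → ℝ) (hν0 : ∀ k, 0 ≤ ν k) (hνT : ∀ k, ν k ≤ T k)
    (Hl η : Fin L → ℝ) (hη0 : ∀ ℓ, 0 ≤ η ℓ) (hηH : ∀ ℓ, η ℓ ≤ Hl ℓ)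
    (h : ℝ → ℂ) (hcont : ContinuousOn h (Set.Icc 0 (D + ε)))
    (hNorm : ℝ) (hhNorm : hNorm = ⨆ θ : Set.Icc (0 : ℝ) (D + ε), ‖h (θ : ℝ)‖)
    (τ : Fin J → ℝ → ℝ) (hτm : ∀ j, Measurable (τ j))
    (hτb : ∀ j t, hd j - μ j ≤ τ j t ∧ τ j t ≤ hd j + μ j)
    (σ : Fin K → ℝ → ℝ) (hσm : ∀ k, Measurable (σ k))
    (hσb : ∀ k t, T k - ν k ≤ σ k t ∧ σ k t ≤ T k + ν k)
    (γ : Fin L → ℝ → ℝ) (hγm : ∀ ℓ, Measurable (γ ℓ))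
    (hγb : ∀ ℓ t, Hl ℓ - η ℓ ≤ γ ℓ t ∧ γ ℓ t ≤ Hl ℓ + η ℓ)
    (δ : ℝ → ℝ) (hδm : Measurable δ) (hδb : ∀ t, D - ε ≤ δ t ∧ δ t ≤ D + ε)
    (Minf Minfd Minfnom Minfnomd : ℝ)
    (hMinf0 : 0 ≤ Minf) (hMinfd0 : 0 ≤ Minfd)
    (hMinfnom0 : 0 ≤ Minfnom) (hMinfnomd0 : 0 ≤ Minfnomd)
    -- gains of the neutral auxiliary system
    (haux : ∀ w z z' : ℝ → EuclideanSpace ℂ (Fin n),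
      IsBddFun w →
      (∀ t, HasDerivAt z (z' t) t) → (∀ t ≤ (0 : ℝ), z t = 0) →
      (∀ t > (0 : ℝ), z' t + ∑ ℓ : Fin L, Am ℓ (z' (t - Hl ℓ))
        = A (z t) + ∑ j : Fin J, Aj j (z (t - hd j))
          + (∫ θ in (0 : ℝ)..D, h θ • z (t - θ)) + w t) →
      IsBddFun z → IsBddFun z' →
      supNorm z ≤ Minf * supNorm w ∧ supNorm z' ≤ Minfd * supNorm w)
    (M'' : ℝ)
    (hM'' : M'' = Minfd * ((∑ j : Fin J, μ j * ‖Aj j‖)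
      + 2 * ∑ ℓ : Fin L, ‖Am ℓ‖))
    (hM''1 : M'' < 1)
    (hsmall : Minf * ε * hNorm *
      (1 + ((∑ j : Fin J, μ j * ‖Aj j‖) + 2 * ∑ ℓ : Fin L, ‖Am ℓ‖)
        * Minfd * (1 - M'')⁻¹) < 1) :
    ∃ C : ℝ, 0 ≤ C ∧
      ∀ u : ℝ → EuclideanSpace ℂ (Fin p), IsBddFun u → (∀ t ≤ (0 : ℝ), u t = 0) →
      ∀ v v' : ℝ → EuclideanSpace ℂ (Fin n),
        (∀ t, HasDerivAt v (v' t) t) → (∀ t ≤ (0 : ℝ), v t = 0) →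
        -- `v` is the neutral nominal solution for `u`
        (∀ t > (0 : ℝ), v' t + ∑ ℓ : Fin L, Am ℓ (v' (t - Hl ℓ))
          = A (v t) + ∑ j : Fin J, Aj j (v (t - hd j))
            + (∫ θ in (0 : ℝ)..D, h θ • v (t - θ))
            + B (u t) + ∑ k : Fin K, Bk k (u (t - T k))) →
        supNorm v ≤ Minfnom * supNorm u → supNorm v' ≤ Minfnomd * supNorm u →
      ∀ x x' : ℝ → EuclideanSpace ℂ (Fin n),
        (∀ t, HasDerivAt x (x' t) t) → (∀ t ≤ (0 : ℝ), x t = 0) →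
        -- `x` solves the neutral time-varying delay system for `u`
        (∀ t > (0 : ℝ), x' t + ∑ ℓ : Fin L, Am ℓ (x' (t - γ ℓ t))
          = A (x t) + ∑ j : Fin J, Aj j (x (t - τ j t))
            + (∫ θ in (0 : ℝ)..(δ t), h θ • x (t - θ))
            + B (u t) + ∑ k : Fin K, Bk k (u (t - σ k t))) →
        IsBddFun x → IsBddFun x' →
        supNorm x ≤ C * supNorm u := by
  classical
  obtain ⟨SA, hSA⟩ : ∃ SA : ℝ, SA = ∑ j : Fin J, μ j * ‖Aj j‖ := ⟨_, rfl⟩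
  obtain ⟨SN, hSN⟩ : ∃ SN : ℝ, SN = ∑ ℓ : Fin L, ‖Am ℓ‖ := ⟨_, rfl⟩
  rw [← hSA, ← hSN] at hM'' hsmall
  obtain ⟨CB, hCB⟩ : ∃ CB : ℝ, CB = ‖B‖ + ∑ k : Fin K, ‖Bk k‖ := ⟨_, rfl⟩
  obtain ⟨Q, hQ⟩ : ∃ Q : ℝ, Q = 1 + (SA + 2 * SN) * Minfd * (1 - M'')⁻¹ := ⟨_, rfl⟩
  rw [← hQ] at hsmall
  obtain ⟨a, ha⟩ : ∃ a : ℝ, a = Minf * ε * hNorm * Q := ⟨_, rfl⟩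
  rw [← ha] at hsmall
  have hSA0 : 0 ≤ SA := hSA ▸ Finset.sum_nonneg fun j _ => mul_nonneg (hμ0 j) (norm_nonneg _)
  have hSN0 : 0 ≤ SN := hSN ▸ Finset.sum_nonneg fun ℓ _ => norm_nonneg _
  have hCB0 : 0 ≤ CB := hCB ▸ add_nonneg (norm_nonneg _)
    (Finset.sum_nonneg fun k _ => norm_nonneg _)
  have hM''inv0 : 0 ≤ (1 - M'')⁻¹ := inv_nonneg.2 (by linarith)
  have hQ0 : 0 ≤ Q := by
    have := mul_nonneg (mul_nonneg (by linarith : (0:ℝ) ≤ SA + 2 * SN) hMinfd0) hM''inv0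
    rw [hQ]; linarith
  have hD0 : (0:ℝ) ≤ D := le_trans hε0 hεD
  have hDε0 : (0:ℝ) ≤ D + ε := by linarith
  -- facts about hNorm
  have hbddh : BddAbove (Set.range fun θ : Set.Icc (0:ℝ) (D+ε) => ‖h (θ:ℝ)‖) := by
    have hc : IsCompact ((fun θ => ‖h θ‖) '' Set.Icc (0:ℝ) (D+ε)) :=
      isCompact_Icc.image_of_continuousOn hcont.norm
    have hrange : Set.range (fun θ : Set.Icc (0:ℝ) (D+ε) => ‖h (θ:ℝ)‖)
        = (fun θ => ‖h θ‖) '' Set.Icc (0:ℝ) (D+ε) := by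
      ext y
      constructor
      · rintro ⟨⟨θ, hθ⟩, rfl⟩; exact ⟨θ, hθ, rfl⟩
      · rintro ⟨θ, hθ, rfl⟩; exact ⟨⟨θ, hθ⟩, rfl⟩
    rw [hrange]; exact hc.bddAbove
  have hhle : ∀ θ ∈ Set.Icc (0:ℝ) (D+ε), ‖h θ‖ ≤ hNorm := by
    intro θ hθ; rw [hhNorm]
    exact le_ciSup hbddh (⟨θ, hθ⟩ : Set.Icc (0:ℝ) (D+ε))
  have hNorm0 : 0 ≤ hNorm :=
    le_trans (norm_nonneg (h 0)) (hhle 0 ⟨le_refl 0, hDε0⟩)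
  have ha0 : 0 ≤ a := ha ▸ mul_nonneg (mul_nonneg (mul_nonneg hMinf0 hε0) hNorm0) hQ0
  have h1a : (0:ℝ) < 1 - a := by linarith
  refine ⟨(1 - a)⁻¹ * (Minf * Q * CB),
    mul_nonneg (inv_nonneg.2 h1a.le) (mul_nonneg (mul_nonneg hMinf0 hQ0) hCB0), ?_⟩
  intro u hu hu0 v v' hv hv0 hveq hvb hvb' x x' hx hx0 hxeq hxb hxb'
  -- x' vanishes on nonpositive times
  have hx'0 : ∀ t ≤ (0:ℝ), x' t = 0 := by
    intro t ht
    rcases lt_or_eq_of_le ht with ht' | ht'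
    · have hev : (fun _ : ℝ => (0 : EuclideanSpace ℂ (Fin n))) =ᶠ[nhds t] x := by
        filter_upwards [Iio_mem_nhds ht'] with s hs using (hx0 s (le_of_lt hs)).symm
      have h1 : HasDerivAt x 0 t :=
        (hasDerivAt_const t (0 : EuclideanSpace ℂ (Fin n))).congr_of_eventuallyEq hev.symm
      exact (hx t).unique h1
    · subst ht'
      have h1 : HasDerivWithinAt x (x' 0) (Set.Iio (0:ℝ)) 0 := (hx 0).hasDerivWithinAt
      have h2 : HasDerivWithinAt x 0 (Set.Iio (0:ℝ)) 0 := by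
        have hc : HasDerivWithinAt (fun _ : ℝ => (0 : EuclideanSpace ℂ (Fin n))) 0
            (Set.Iio (0:ℝ)) 0 := hasDerivWithinAt_const _ _ _
        exact hc.congr (fun s hs => hx0 s (le_of_lt hs)) (hx0 0 le_rfl)
      have e1 := h1.derivWithin (uniqueDiffWithinAt_Iio (0:ℝ))
      have e2 := h2.derivWithin (uniqueDiffWithinAt_Iio (0:ℝ))
      rw [← e1, e2]
  have hU0 : 0 ≤ supNorm u := supNorm_nonneg u
  have hX0 : 0 ≤ supNorm x := supNorm_nonneg x
  have hX'0 : 0 ≤ supNorm x' := supNorm_nonneg x'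
  have hule : ∀ s, ‖u s‖ ≤ supNorm u := norm_le_supNorm hu hu0
  have hxle : ∀ s, ‖x s‖ ≤ supNorm x := norm_le_supNorm hxb hx0
  have hx'le : ∀ s, ‖x' s‖ ≤ supNorm x' := norm_le_supNorm hxb' hx'0
  have hxc : Continuous x := continuous_iff_continuousAt.mpr fun t => (hx t).continuousAt
  -- Lipschitz estimate
  have hlip : ∀ s r : ℝ, ‖x s - x r‖ ≤ supNorm x' * |s - r| := by
    intro s r
    have := Convex.norm_image_sub_le_of_norm_hasDerivWithin_le
      (f := x) (f' := x') (s := Set.univ) (C := supNorm x')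
      (fun q _ => (hx q).hasDerivWithinAt) (fun q _ => hx'le q) convex_univ
      (Set.mem_univ r) (Set.mem_univ s)
    simpa [Real.norm_eq_abs] using this
  -- integrability/boundedness of the distributed-delay integrals
  have hint : ∀ (t b : ℝ), 0 ≤ b → b ≤ D + ε →
      IntervalIntegrable (fun θ => h θ • x (t - θ)) volume 0 b := by
    intro t b hb0 hb
    apply ContinuousOn.intervalIntegrable
    apply ContinuousOn.smul (hcont.mono ?_)
      ((hxc.comp (continuous_const.sub continuous_id)).continuousOn)
    rw [Set.uIcc_of_le hb0]
    exact Set.Icc_subset_Icc le_rfl hb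
  have hIb : ∀ (t c d : ℝ), 0 ≤ min c d → max c d ≤ D + ε →
      ‖∫ θ in c..d, h θ • x (t - θ)‖ ≤ hNorm * supNorm x * |d - c| := by
    intro t c d hmin hmax
    apply intervalIntegral.norm_integral_le_of_norm_le_const
    intro θ hθ
    rw [Set.mem_uIoc] at hθ
    have hθI : θ ∈ Set.Icc (0:ℝ) (D + ε) := by
      rcases hθ with ⟨h1, h2⟩ | ⟨h1, h2⟩
      · exact ⟨le_trans hmin (le_trans (min_le_left c d) h1.le),
          le_trans (le_trans h2 (le_max_right c d)) hmax⟩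
      · exact ⟨le_trans hmin (le_trans (min_le_right c d) h1.le),
          le_trans (le_trans h2 (le_max_left c d)) hmax⟩
    calc ‖h θ • x (t - θ)‖ = ‖h θ‖ * ‖x (t - θ)‖ := norm_smul _ _
      _ ≤ hNorm * supNorm x :=
        mul_le_mul (hhle θ hθI) (hxle _) (norm_nonneg _) hNorm0
  -- the auxiliary input
  set w : ℝ → EuclideanSpace ℂ (Fin n) := fun t =>
    x' t + ∑ ℓ : Fin L, Am ℓ (x' (t - Hl ℓ)) - A (x t)
      - ∑ j : Fin J, Aj j (x (t - hd j)) - ∫ θ in (0:ℝ)..D, h θ • x (t - θ) with hwdef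
  have hwapp : ∀ t, w t = x' t + ∑ ℓ : Fin L, Am ℓ (x' (t - Hl ℓ)) - A (x t)
      - ∑ j : Fin J, Aj j (x (t - hd j)) - ∫ θ in (0:ℝ)..D, h θ • x (t - θ) :=
    fun t => rfl
  -- w is bounded
  have hwb : IsBddFun w := by
    refine ⟨supNorm x' + SN * supNorm x' + ‖A‖ * supNorm x
      + (∑ j : Fin J, ‖Aj j‖) * supNorm x + hNorm * supNorm x * D, fun t => ?_⟩
    rw [hwapp t]
    have hI := hIb t 0 D (by simp [hD0]) (by rw [max_eq_right hD0]; linarith)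
    rw [sub_zero, abs_of_nonneg hD0] at hI
    refine (norm_sub5_le _ _ _ _ _).trans ?_
    have h2 : ‖∑ ℓ : Fin L, Am ℓ (x' (t - Hl ℓ))‖ ≤ SN * supNorm x' := by
      calc ‖∑ ℓ : Fin L, Am ℓ (x' (t - Hl ℓ))‖ ≤ ∑ ℓ : Fin L, ‖Am ℓ (x' (t - Hl ℓ))‖ :=
            norm_sum_le _ _
        _ ≤ ∑ ℓ : Fin L, ‖Am ℓ‖ * supNorm x' := Finset.sum_le_sum fun ℓ _ =>
            ((Am ℓ).le_opNorm _).trans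
              (mul_le_mul_of_nonneg_left (hx'le _) (norm_nonneg _))
        _ = SN * supNorm x' := by rw [hSN]; exact (Finset.sum_mul _ _ _).symm
    have h3 : ‖A (x t)‖ ≤ ‖A‖ * supNorm x :=
      (A.le_opNorm _).trans (mul_le_mul_of_nonneg_left (hxle _) (norm_nonneg _))
    have h4 : ‖∑ j : Fin J, Aj j (x (t - hd j))‖ ≤ (∑ j : Fin J, ‖Aj j‖) * supNorm x := by
      calc ‖∑ j : Fin J, Aj j (x (t - hd j))‖ ≤ ∑ j : Fin J, ‖Aj j (x (t - hd j))‖ :=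
            norm_sum_le _ _
        _ ≤ ∑ j : Fin J, ‖Aj j‖ * supNorm x := Finset.sum_le_sum fun j _ =>
            ((Aj j).le_opNorm _).trans
              (mul_le_mul_of_nonneg_left (hxle _) (norm_nonneg _))
        _ = (∑ j : Fin J, ‖Aj j‖) * supNorm x := (Finset.sum_mul _ _ _).symm
    linarith [hx'le t]
  -- bound on w for positive times
  have hwle : ∀ t, 0 < t →
      ‖w t‖ ≤ (SA + 2 * SN) * supNorm x' + (ε * hNorm * supNorm x + CB * supNorm u) := by
    intro t ht
    have heq := hxeq t ht
    have hδ1 := (hδb t).1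
    have hδ2 := (hδb t).2
    have hIδ : IntervalIntegrable (fun θ => h θ • x (t - θ)) volume 0 (δ t) :=
      hint t (δ t) (by linarith) hδ2
    have hID : IntervalIntegrable (fun θ => h θ • x (t - θ)) volume 0 D :=
      hint t D hD0 (by linarith)
    have hsplit : (∫ θ in (0:ℝ)..(δ t), h θ • x (t - θ)) - ∫ θ in (0:ℝ)..D, h θ • x (t - θ)
        = ∫ θ in D..(δ t), h θ • x (t - θ) :=
      intervalIntegral.integral_interval_sub_left hIδ hID
    have hx't : x' t = A (x t) + ∑ j : Fin J, Aj j (x (t - τ j t))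
        + (∫ θ in (0:ℝ)..(δ t), h θ • x (t - θ)) + B (u t)
        + ∑ k : Fin K, Bk k (u (t - σ k t))
        - ∑ ℓ : Fin L, Am ℓ (x' (t - γ ℓ t)) := eq_sub_of_add_eq heq
    have hwt : w t = (∑ ℓ : Fin L, (Am ℓ (x' (t - Hl ℓ)) - Am ℓ (x' (t - γ ℓ t))))
        + (∑ j : Fin J, (Aj j (x (t - τ j t)) - Aj j (x (t - hd j))))
        + (∫ θ in D..(δ t), h θ • x (t - θ))
        + (B (u t) + ∑ k : Fin K, Bk k (u (t - σ k t))) := by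
      rw [hwapp t, ← hsplit, hx't, Finset.sum_sub_distrib, Finset.sum_sub_distrib]
      abel
    rw [hwt]
    have h1 : ‖∑ ℓ : Fin L, (Am ℓ (x' (t - Hl ℓ)) - Am ℓ (x' (t - γ ℓ t)))‖
        ≤ SN * (2 * supNorm x') := by
      calc ‖∑ ℓ : Fin L, (Am ℓ (x' (t - Hl ℓ)) - Am ℓ (x' (t - γ ℓ t)))‖
          ≤ ∑ ℓ : Fin L, ‖Am ℓ (x' (t - Hl ℓ)) - Am ℓ (x' (t - γ ℓ t))‖ := norm_sum_le _ _
        _ ≤ ∑ ℓ : Fin L, ‖Am ℓ‖ * (2 * supNorm x') := Finset.sum_le_sum fun ℓ _ => by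
            rw [← map_sub]
            exact ((Am ℓ).le_opNorm _).trans (mul_le_mul_of_nonneg_left
              ((norm_sub_le _ _).trans
                (by linarith [hx'le (t - Hl ℓ), hx'le (t - γ ℓ t)]))
              (norm_nonneg _))
        _ = SN * (2 * supNorm x') := by rw [hSN]; exact (Finset.sum_mul _ _ _).symm
    have h2 : ‖∑ j : Fin J, (Aj j (x (t - τ j t)) - Aj j (x (t - hd j)))‖
        ≤ SA * supNorm x' := by
      calc ‖∑ j : Fin J, (Aj j (x (t - τ j t)) - Aj j (x (t - hd j)))‖
          ≤ ∑ j : Fin J, ‖Aj j (x (t - τ j t)) - Aj j (x (t - hd j))‖ := norm_sum_le _ _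
        _ ≤ ∑ j : Fin J, (μ j * ‖Aj j‖) * supNorm x' := Finset.sum_le_sum fun j _ => by
            rw [← map_sub]
            have hmv := hlip (t - τ j t) (t - hd j)
            have habs : |(t - τ j t) - (t - hd j)| ≤ μ j := by
              have hb1 := (hτb j t).1
              have hb2 := (hτb j t).2
              rw [abs_le]; constructor <;> linarith
            calc ‖Aj j (x (t - τ j t) - x (t - hd j))‖
                ≤ ‖Aj j‖ * ‖x (t - τ j t) - x (t - hd j)‖ := (Aj j).le_opNorm _
              _ ≤ ‖Aj j‖ * (supNorm x' * μ j) := mul_le_mul_of_nonneg_left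
                  (hmv.trans (mul_le_mul_of_nonneg_left habs hX'0)) (norm_nonneg _)
              _ = (μ j * ‖Aj j‖) * supNorm x' := by ring
        _ = SA * supNorm x' := by rw [hSA]; exact (Finset.sum_mul _ _ _).symm
    have h3 : ‖∫ θ in D..(δ t), h θ • x (t - θ)‖ ≤ hNorm * supNorm x * ε := by
      have hI := hIb t D (δ t) (le_min hD0 (by linarith)) (max_le (by linarith) hδ2)
      refine hI.trans (mul_le_mul_of_nonneg_left ?_ (mul_nonneg hNorm0 hX0))
      rw [abs_le]; constructor <;> linarith
    have h4 : ‖B (u t) + ∑ k : Fin K, Bk k (u (t - σ k t))‖ ≤ CB * supNorm u := by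
      calc ‖B (u t) + ∑ k : Fin K, Bk k (u (t - σ k t))‖
          ≤ ‖B (u t)‖ + ‖∑ k : Fin K, Bk k (u (t - σ k t))‖ := norm_add_le _ _
        _ ≤ ‖B‖ * supNorm u + (∑ k : Fin K, ‖Bk k‖) * supNorm u := by
            refine add_le_add ((B.le_opNorm _).trans
              (mul_le_mul_of_nonneg_left (hule _) (norm_nonneg _))) ?_
            calc ‖∑ k : Fin K, Bk k (u (t - σ k t))‖
                ≤ ∑ k : Fin K, ‖Bk k (u (t - σ k t))‖ := norm_sum_le _ _
              _ ≤ ∑ k : Fin K, ‖Bk k‖ * supNorm u := Finset.sum_le_sum fun k _ =>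
                  ((Bk k).le_opNorm _).trans
                    (mul_le_mul_of_nonneg_left (hule _) (norm_nonneg _))
              _ = (∑ k : Fin K, ‖Bk k‖) * supNorm u := (Finset.sum_mul _ _ _).symm
        _ = CB * supNorm u := by rw [hCB]; ring
    refine (norm_add4_le _ _ _ _).trans ?_
    linarith [h1, h2, h3, h4]
  have hWle : supNorm w ≤ (SA + 2 * SN) * supNorm x'
      + (ε * hNorm * supNorm x + CB * supNorm u) := supNorm_le hwle
  -- apply the auxiliary gains
  have heqaux : ∀ t > (0:ℝ), x' t + ∑ ℓ : Fin L, Am ℓ (x' (t - Hl ℓ))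
      = A (x t) + ∑ j : Fin J, Aj j (x (t - hd j))
        + (∫ θ in (0:ℝ)..D, h θ • x (t - θ)) + w t := by
    intro t ht
    rw [hwapp t]
    abel
  obtain ⟨hXW, hX'W⟩ := haux w x x' hwb hx hx0 heqaux hxb hxb'
  -- close the fixed-point inequalities
  have hr0 : 0 ≤ ε * hNorm * supNorm x + CB * supNorm u :=
    add_nonneg (mul_nonneg (mul_nonneg hε0 hNorm0) hX0) (mul_nonneg hCB0 hU0)
  have hstep1 : supNorm x' ≤ M'' * supNorm x'
      + Minfd * (ε * hNorm * supNorm x + CB * supNorm u) := by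
    calc supNorm x' ≤ Minfd * supNorm w := hX'W
      _ ≤ Minfd * ((SA + 2 * SN) * supNorm x'
          + (ε * hNorm * supNorm x + CB * supNorm u)) :=
        mul_le_mul_of_nonneg_left hWle hMinfd0
      _ = M'' * supNorm x' + Minfd * (ε * hNorm * supNorm x + CB * supNorm u) := by
        rw [hM'']; ring
  have h1M : (0:ℝ) < 1 - M'' := by linarith
  have hstep2 : (1 - M'') * supNorm x'
      ≤ Minfd * (ε * hNorm * supNorm x + CB * supNorm u) := by
    have hexp : (1 - M'') * supNorm x' = supNorm x' - M'' * supNorm x' := by ring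
    linarith [hstep1]
  have hX'r : supNorm x' ≤ (1 - M'')⁻¹ * (Minfd * (ε * hNorm * supNorm x + CB * supNorm u)) := by
    calc supNorm x' = (1 - M'')⁻¹ * ((1 - M'') * supNorm x') := by
          field_simp
      _ ≤ (1 - M'')⁻¹ * (Minfd * (ε * hNorm * supNorm x + CB * supNorm u)) :=
        mul_le_mul_of_nonneg_left hstep2 hM''inv0
  have hWr : supNorm w ≤ Q * (ε * hNorm * supNorm x + CB * supNorm u) := by
    calc supNorm w ≤ (SA + 2 * SN) * supNorm x'
        + (ε * hNorm * supNorm x + CB * supNorm u) := hWle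
      _ ≤ (SA + 2 * SN) * ((1 - M'')⁻¹ * (Minfd * (ε * hNorm * supNorm x + CB * supNorm u)))
        + (ε * hNorm * supNorm x + CB * supNorm u) :=
        add_le_add (mul_le_mul_of_nonneg_left hX'r (by linarith)) le_rfl
      _ = Q * (ε * hNorm * supNorm x + CB * supNorm u) := by rw [hQ]; ring
  have hXr : supNorm x ≤ a * supNorm x + Minf * Q * CB * supNorm u := by
    calc supNorm x ≤ Minf * supNorm w := hXW
      _ ≤ Minf * (Q * (ε * hNorm * supNorm x + CB * supNorm u)) :=
        mul_le_mul_of_nonneg_left hWr hMinf0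
      _ = a * supNorm x + Minf * Q * CB * supNorm u := by rw [ha]; ring
  have hfin : (1 - a) * supNorm x ≤ Minf * Q * CB * supNorm u := by
    have hexp : (1 - a) * supNorm x = supNorm x - a * supNorm x := by ring
    linarith [hXr]
  calc supNorm x = (1 - a)⁻¹ * ((1 - a) * supNorm x) := by field_simp
    _ ≤ (1 - a)⁻¹ * (Minf * Q * CB * supNorm u) :=
      mul_le_mul_of_nonneg_left hfin (inv_nonneg.2 h1a.le)
    _ = (1 - a)⁻¹ * (Minf * Q * CB) * supNorm u := by ring
end

section
/- (Proposition, Section 4.2: finitely many poles of commensurate neutral systems under Hypothesis (H).) Let H > 0, let A, A_1, …, A_J, A_{−1}, …, A_{−L} ∈ M_n(ℂ) with Σ_{ℓ=1}^L ‖A_{−ℓ}‖ < 1 (operator norm), let D ≥ 0 and let h : [0,D] → ℂ be a polynomial function. Define the entire function F : ℂ → ℂ by F(s) = det( sI − A + Σ_{ℓ=1}^L A_{−ℓ} · s · e^{−ℓ H s} − Σ_{j=1}^J A_j e^{−j H s} − ( ∫_0^D h(θ) e^{−θ s} dθ )·I ). Then there exists a real number a < 0 such that the set { s ∈ ℂ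 : Re s > a and F(s) = 0 } is finite. -/
open MeasureTheory intervalIntegral Metric in
lemma integral_diff_aux (P : Polynomial ℂ) (D : ℝ) (hD : 0 ≤ D) :
    Differentiable ℂ (fun s : ℂ => ∫ θ in (0:ℝ)..D, P.eval (θ:ℂ) * Complex.exp (-(θ:ℂ) * s)) := by
  intro s₀
  obtain ⟨Cp, hCp⟩ : ∃ C, ∀ θ ∈ Set.Icc (0:ℝ) D, ‖P.eval (θ:ℂ)‖ ≤ C :=
    (isCompact_Icc (a := (0:ℝ)) (b := D)).exists_bound_of_continuousOn
      ((Polynomial.continuous P |>.comp Complex.continuous_ofReal)).continuousOn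
  have key := intervalIntegral.hasDerivAt_integral_of_dominated_loc_of_deriv_le
    (μ := volume) (a := (0:ℝ)) (b := D) (s := Metric.ball s₀ 1) (x₀ := s₀)
    (F := fun (x : ℂ) (t : ℝ) => P.eval (t:ℂ) * Complex.exp (-(t:ℂ) * x))
    (F' := fun (x : ℂ) (t : ℝ) => P.eval (t:ℂ) * (Complex.exp (-(t:ℂ) * x) * (-(t:ℂ))))
    (bound := fun _ => Cp * (Real.exp (D * (|s₀.re| + 1)) * D))
    (Metric.ball_mem_nhds s₀ one_pos)
    (Filter.Eventually.of_forall fun x =>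
      (((Polynomial.continuous P).comp Complex.continuous_ofReal).mul
        ((Complex.continuous_exp.comp ((Complex.continuous_ofReal.neg).mul
          continuous_const)))).aestronglyMeasurable.restrict)
    (((Polynomial.continuous P |>.comp Complex.continuous_ofReal).mul
      (Complex.continuous_exp.comp ((Complex.continuous_ofReal.neg).mul
        continuous_const))).intervalIntegrable _ _)
    ((((Polynomial.continuous P).comp Complex.continuous_ofReal).mul
      ((Complex.continuous_exp.comp ((Complex.continuous_ofReal.neg).mul
        continuous_const)).mul (Complex.continuous_ofReal.neg))).aestronglyMeasurable.restrict)
    (Filter.Eventually.of_forall ?_) (intervalIntegrable_const)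
    (Filter.Eventually.of_forall ?_)
  · exact key.2.differentiableAt
  · -- bound
    intro t ht x hx
    rw [Set.uIoc_of_le hD] at ht
    have h0t : (0:ℝ) ≤ t := ht.1.le
    have htD : t ≤ D := ht.2
    have hre : |x.re| ≤ |s₀.re| + 1 := by
      have h1 : ‖x - s₀‖ < 1 := mem_ball_iff_norm.mp hx
      have h2 : |x.re - s₀.re| ≤ ‖x - s₀‖ := by
        simpa using Complex.abs_re_le_norm (x - s₀)
      calc |x.re| = |(x.re - s₀.re) + s₀.re| := by ring_nf
        _ ≤ |x.re - s₀.re| + |s₀.re| := abs_add_le _ _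
        _ ≤ |s₀.re| + 1 := by linarith
    have hnorm : ‖P.eval (t:ℂ) * (Complex.exp (-(t:ℂ) * x) * (-(t:ℂ)))‖
        = ‖P.eval (t:ℂ)‖ * (Real.exp (-(t * x.re)) * t) := by
      rw [norm_mul, norm_mul]
      congr 2
      · rw [Complex.norm_exp]
        congr 1
        simp [Complex.mul_re]
      · simpa [abs_of_nonneg h0t] using Complex.norm_real (-t)
    rw [hnorm]
    have hexp : Real.exp (-(t * x.re)) ≤ Real.exp (D * (|s₀.re| + 1)) := by
      apply Real.exp_le_exp.2
      calc -(t * x.re) ≤ |t * x.re| := neg_le_abs _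
        _ = t * |x.re| := by rw [abs_mul, abs_of_nonneg h0t]
        _ ≤ D * (|s₀.re| + 1) := by
            apply mul_le_mul htD hre (abs_nonneg _) hD
    have hCp' := hCp t ⟨h0t, htD⟩
    have h0 : (0:ℝ) ≤ ‖P.eval (t:ℂ)‖ := norm_nonneg _
    apply mul_le_mul hCp' _ (by positivity) ((norm_nonneg _).trans hCp')
    exact mul_le_mul hexp htD h0t (Real.exp_nonneg _)
  · -- diff
    intro t _ x _
    have h1 : HasDerivAt (fun x : ℂ => -(t:ℂ) * x) (-(t:ℂ)) x := by
      simpa using (hasDerivAt_id x).const_mul (-(t:ℂ))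
    exact (h1.cexp).const_mul (P.eval (t:ℂ))

set_option maxHeartbeats 2000000 in
/-- (Proposition, Section 4.2: finitely many poles of commensurate neutral
systems under Hypothesis (H).)  Let `H > 0`, `Σℓ ‖A₋ℓ‖ < 1`, `D ≥ 0` and let
`h` be a polynomial function on `[0,D]`.  Let
`F(s) = det(sI − A + Σℓ A₋ℓ s e^{−ℓHs} − Σj Aj e^{−jHs} − (∫₀^D h(θ)e^{−θs}dθ)·I)`.
Then there is `a < 0` such that `{s : Re s > a, F(s) = 0}` is finite. -/
theorem stmt_7 (n J L : ℕ) (H : ℝ) (hH : 0 < H)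
    (A : EuclideanSpace ℂ (Fin n) →L[ℂ] EuclideanSpace ℂ (Fin n))
    (Aj : Fin J → EuclideanSpace ℂ (Fin n) →L[ℂ] EuclideanSpace ℂ (Fin n))
    (Am : Fin L → EuclideanSpace ℂ (Fin n) →L[ℂ] EuclideanSpace ℂ (Fin n))
    (hAm : ∑ ℓ, ‖Am ℓ‖ < 1)
    (D : ℝ) (hD : 0 ≤ D)
    (h : ℝ → ℂ) (P : Polynomial ℂ)
    (hP : ∀ θ ∈ Set.Icc (0 : ℝ) D, h θ = P.eval (θ : ℂ))
    (F : ℂ → ℂ)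
    (hF : ∀ s : ℂ, F s =
      LinearMap.det
        (((s • ContinuousLinearMap.id ℂ (EuclideanSpace ℂ (Fin n))
          - A
          + ∑ ℓ : Fin L,
              (s * Complex.exp (-((((ℓ : ℕ) + 1 : ℕ) : ℂ) * (H : ℂ)) * s)) • Am ℓ
          - ∑ j : Fin J,
              Complex.exp (-((((j : ℕ) + 1 : ℕ) : ℂ) * (H : ℂ)) * s) • Aj j
          - (∫ θ in (0 : ℝ)..D, h θ * Complex.exp (-(θ : ℂ) * s)) •
              ContinuousLinearMap.id ℂ (EuclideanSpace ℂ (Fin n))) :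
            EuclideanSpace ℂ (Fin n) →L[ℂ] EuclideanSpace ℂ (Fin n)) :
          EuclideanSpace ℂ (Fin n) →ₗ[ℂ] EuclideanSpace ℂ (Fin n))) :
    ∃ a : ℝ, a < 0 ∧ {s : ℂ | a < s.re ∧ F s = 0}.Finite := by
  classical
  -- the integral coefficient
  set g : ℂ → ℂ := fun s => ∫ θ in (0:ℝ)..D, h θ * Complex.exp (-(θ:ℂ) * s) with hg_def
  have hg_eq : g = fun s => ∫ θ in (0:ℝ)..D, P.eval (θ:ℂ) * Complex.exp (-(θ:ℂ) * s) := by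
    funext s
    apply intervalIntegral.integral_congr
    intro θ hθ
    rw [Set.uIcc_of_le hD] at hθ
    simp only [hP θ hθ]
  have hg_diff : Differentiable ℂ g := by
    rw [hg_eq]; exact integral_diff_aux P D hD
  -- the operator family
  set T : ℂ → ((EuclideanSpace ℂ (Fin n)) →L[ℂ] (EuclideanSpace ℂ (Fin n))) := fun s =>
    s • ContinuousLinearMap.id ℂ (EuclideanSpace ℂ (Fin n)) - A
      + ∑ ℓ : Fin L, (s * Complex.exp (-((((ℓ : ℕ) + 1 : ℕ) : ℂ) * (H : ℂ)) * s)) • Am ℓ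
      - ∑ j : Fin J, Complex.exp (-((((j : ℕ) + 1 : ℕ) : ℂ) * (H : ℂ)) * s) • Aj j
      - g s • ContinuousLinearMap.id ℂ (EuclideanSpace ℂ (Fin n)) with hT_def
  have hFT : ∀ s, F s = LinearMap.det ((T s : (EuclideanSpace ℂ (Fin n)) →L[ℂ] (EuclideanSpace ℂ (Fin n))) : (EuclideanSpace ℂ (Fin n)) →ₗ[ℂ] (EuclideanSpace ℂ (Fin n))) := fun s => hF s
  -- choice of `a`
  obtain ⟨a, ha1, ha0⟩ : ∃ a : ℝ, (∑ ℓ, ‖Am ℓ‖) * Real.exp (L * H * (-a)) < 1 ∧ a < 0 := by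
    have hcont : Continuous fun a : ℝ => (∑ ℓ, ‖Am ℓ‖) * Real.exp (L * H * (-a)) :=
      continuous_const.mul (Real.continuous_exp.comp (continuous_const.mul continuous_neg))
    have h0 : (∑ ℓ, ‖Am ℓ‖) * Real.exp ((L:ℝ) * H * (-(0:ℝ))) < 1 := by rw [neg_zero, mul_zero, Real.exp_zero, mul_one]; exact hAm
    have hev := (hcont.continuousAt (x := 0)).eventually_lt_const h0
    have hev' := hev.filter_mono (nhdsWithin_le_nhds (s := Set.Iio (0:ℝ)))
    exact (hev'.and eventually_mem_nhdsWithin).exists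
  set r : ℝ := (∑ ℓ, ‖Am ℓ‖) * Real.exp (L * H * (-a)) with hr_def
  have hr0 : 0 ≤ r := mul_nonneg (Finset.sum_nonneg fun _ _ => norm_nonneg _) (Real.exp_nonneg _)
  -- bound for the polynomial on [0, D]
  obtain ⟨Cp, hCp⟩ : ∃ C, ∀ θ ∈ Set.Icc (0:ℝ) D, ‖P.eval (θ:ℂ)‖ ≤ C :=
    (isCompact_Icc (a := (0:ℝ)) (b := D)).exists_bound_of_continuousOn
      ((Polynomial.continuous P |>.comp Complex.continuous_ofReal)).continuousOn
  have hCp0 : 0 ≤ Cp := le_trans (norm_nonneg _) (hCp 0 ⟨le_refl _, hD⟩)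
  -- bound for the integral term on the half plane
  have hg_bound : ∀ s : ℂ, a ≤ s.re → ‖g s‖ ≤ Cp * Real.exp (D * (-a)) * D := by
    intro s hs
    have hgs : ‖g s‖ = ‖∫ θ in (0:ℝ)..D, P.eval (θ:ℂ) * Complex.exp (-(θ:ℂ) * s)‖ := by
      rw [hg_eq]
    rw [hgs]
    have hb := intervalIntegral.norm_integral_le_of_norm_le_const
      (a := (0:ℝ)) (b := D) (C := Cp * Real.exp (D * (-a)))
      (f := fun θ : ℝ => P.eval (θ:ℂ) * Complex.exp (-(θ:ℂ) * s)) ?_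
    · calc ‖∫ θ in (0:ℝ)..D, P.eval (θ:ℂ) * Complex.exp (-(θ:ℂ) * s)‖
          ≤ Cp * Real.exp (D * (-a)) * |D - 0| := hb
        _ = Cp * Real.exp (D * (-a)) * D := by rw [sub_zero, abs_of_nonneg hD]
    · intro θ hθ
      rw [Set.uIoc_of_le hD] at hθ
      have h0θ : (0:ℝ) ≤ θ := hθ.1.le
      have hθD : θ ≤ D := hθ.2
      rw [norm_mul]
      have h1 : ‖Complex.exp (-(θ:ℂ) * s)‖ ≤ Real.exp (D * (-a)) := by
        rw [Complex.norm_exp]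
        apply Real.exp_le_exp.2
        have hre : (-(θ:ℂ) * s).re = -(θ * s.re) := by simp [Complex.mul_re]
        rw [hre]
        nlinarith [mul_le_mul_of_nonneg_left hs h0θ]
      exact mul_le_mul (hCp θ ⟨h0θ, hθD⟩) h1 (norm_nonneg _) hCp0
  set CK : ℝ := ‖A‖ + (∑ j, ‖Aj j‖) * Real.exp ((J:ℝ) * H * (-a)) + Cp * Real.exp (D * (-a)) * D
    with hCK_def
  have hCK0 : 0 ≤ CK := by positivity
  set M : ℝ := CK / (1 - r) + 1 with hM_def
  have h1r : (0:ℝ) < 1 - r := by linarith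
  have hM0 : 0 < M := by
    have := div_nonneg hCK0 h1r.le
    rw [hM_def]; linarith
  -- the key claim : no zeros far out in the half-plane
  have key_exp : ∀ (k m : ℕ), (k:ℝ) ≤ (m:ℝ) → ∀ s : ℂ, a ≤ s.re →
      ‖Complex.exp (-(((k:ℕ):ℂ) * (H:ℂ)) * s)‖ ≤ Real.exp ((m:ℝ) * H * (-a)) := by
    intro k m hkm s hs
    rw [Complex.norm_exp]
    apply Real.exp_le_exp.2
    have hre : (-(((k:ℕ):ℂ) * (H:ℂ)) * s).re = -((k:ℝ) * H * s.re) := by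
      simp [Complex.mul_re]
    rw [hre]
    have hk0 : (0:ℝ) ≤ (k:ℝ) := Nat.cast_nonneg k
    nlinarith [mul_le_mul_of_nonneg_left hs (mul_nonneg hk0 hH.le),
      mul_le_mul_of_nonneg_right hkm (mul_nonneg hH.le (by linarith : (0:ℝ) ≤ -a))]
  have hbig : ∀ s : ℂ, a ≤ s.re → M < ‖s‖ → F s ≠ 0 := by
    intro s hsre hsM hF0
    rw [hFT s] at hF0
    have hker := LinearMap.bot_lt_ker_of_det_eq_zero hF0
    obtain ⟨x, hxker, hx0⟩ := (Submodule.ne_bot_iff _).mp hker.ne'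
    have hTx : T s x = 0 := hxker
    set u : (EuclideanSpace ℂ (Fin n)) := s • x + ∑ ℓ : Fin L,
        (s * Complex.exp (-((((ℓ : ℕ) + 1 : ℕ) : ℂ) * (H : ℂ)) * s)) • (Am ℓ x) with hu_def
    set v : (EuclideanSpace ℂ (Fin n)) := A x + (∑ j : Fin J,
        Complex.exp (-((((j : ℕ) + 1 : ℕ) : ℂ) * (H : ℂ)) * s) • (Aj j x)) + g s • x with hv_def
    have hTxe : T s x = u - v := by
      rw [hT_def, hu_def, hv_def]
      simp only [ContinuousLinearMap.sub_apply, ContinuousLinearMap.add_apply,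
        ContinuousLinearMap.smul_apply, ContinuousLinearMap.sum_apply,
        ContinuousLinearMap.id_apply]
      abel
    have huv : u = v := by
      have := hTxe ▸ hTx
      exact sub_eq_zero.mp this
    have hx0' : (0:ℝ) < ‖x‖ := norm_pos_iff.mpr hx0
    -- bound on the neutral sum
    have hsum_u : ‖∑ ℓ : Fin L,
        (s * Complex.exp (-((((ℓ : ℕ) + 1 : ℕ) : ℂ) * (H : ℂ)) * s)) • (Am ℓ x)‖
        ≤ ‖s‖ * r * ‖x‖ := by
      calc ‖∑ ℓ : Fin L,
          (s * Complex.exp (-((((ℓ : ℕ) + 1 : ℕ) : ℂ) * (H : ℂ)) * s)) • (Am ℓ x)‖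
          ≤ ∑ ℓ : Fin L,
            ‖(s * Complex.exp (-((((ℓ : ℕ) + 1 : ℕ) : ℂ) * (H : ℂ)) * s)) • (Am ℓ x)‖ :=
            norm_sum_le _ _
        _ ≤ ∑ ℓ : Fin L, (‖s‖ * Real.exp ((L:ℝ) * H * (-a))) * (‖Am ℓ‖ * ‖x‖) := by
            apply Finset.sum_le_sum
            intro ℓ _
            rw [norm_smul, norm_mul]
            apply mul_le_mul _ ((Am ℓ).le_opNorm x) (norm_nonneg _)
              (by positivity)
            apply mul_le_mul_of_nonneg_left _ (norm_nonneg s)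
            exact key_exp ((ℓ:ℕ)+1) L (by exact_mod_cast Nat.succ_le_of_lt ℓ.isLt) s hsre
        _ = ‖s‖ * r * ‖x‖ := by
            rw [← Finset.mul_sum, hr_def]
            rw [← Finset.sum_mul]
            ring
    have hu_lower : ‖s‖ * (1 - r) * ‖x‖ ≤ ‖u‖ := by
      have h1 : ‖s • x‖ ≤ ‖u‖ + ‖∑ ℓ : Fin L,
          (s * Complex.exp (-((((ℓ : ℕ) + 1 : ℕ) : ℂ) * (H : ℂ)) * s)) • (Am ℓ x)‖ := by
        have : s • x = u - ∑ ℓ : Fin L,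
            (s * Complex.exp (-((((ℓ : ℕ) + 1 : ℕ) : ℂ) * (H : ℂ)) * s)) • (Am ℓ x) := by
          rw [hu_def]; abel
        rw [this]
        exact norm_sub_le _ _
      rw [norm_smul] at h1
      nlinarith [hsum_u]
    -- bound on v
    have hsum_v : ‖∑ j : Fin J,
        Complex.exp (-((((j : ℕ) + 1 : ℕ) : ℂ) * (H : ℂ)) * s) • (Aj j x)‖
        ≤ (∑ j, ‖Aj j‖) * Real.exp ((J:ℝ) * H * (-a)) * ‖x‖ := by
      calc ‖∑ j : Fin J, Complex.exp (-((((j : ℕ) + 1 : ℕ) : ℂ) * (H : ℂ)) * s) • (Aj j x)‖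
          ≤ ∑ j : Fin J, ‖Complex.exp (-((((j : ℕ) + 1 : ℕ) : ℂ) * (H : ℂ)) * s) • (Aj j x)‖ :=
            norm_sum_le _ _
        _ ≤ ∑ j : Fin J, Real.exp ((J:ℝ) * H * (-a)) * (‖Aj j‖ * ‖x‖) := by
            apply Finset.sum_le_sum
            intro j _
            rw [norm_smul]
            exact mul_le_mul
              (key_exp ((j:ℕ)+1) J (by exact_mod_cast Nat.succ_le_of_lt j.isLt) s hsre)
              ((Aj j).le_opNorm x) (norm_nonneg _) (Real.exp_nonneg _)
        _ = (∑ j, ‖Aj j‖) * Real.exp ((J:ℝ) * H * (-a)) * ‖x‖ := by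
            rw [← Finset.mul_sum, ← Finset.sum_mul]
            ring
    have hv_upper : ‖v‖ ≤ CK * ‖x‖ := by
      have h1 : ‖v‖ ≤ ‖A x‖ + ‖∑ j : Fin J,
          Complex.exp (-((((j : ℕ) + 1 : ℕ) : ℂ) * (H : ℂ)) * s) • (Aj j x)‖ + ‖g s • x‖ := by
        rw [hv_def]
        exact norm_add₃_le
      have h2 : ‖A x‖ ≤ ‖A‖ * ‖x‖ := A.le_opNorm x
      have h3 : ‖g s • x‖ ≤ Cp * Real.exp (D * (-a)) * D * ‖x‖ := by
        rw [norm_smul]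
        exact mul_le_mul_of_nonneg_right (hg_bound s hsre) (norm_nonneg _)
      calc ‖v‖ ≤ ‖A‖ * ‖x‖ + (∑ j, ‖Aj j‖) * Real.exp ((J:ℝ) * H * (-a)) * ‖x‖
            + Cp * Real.exp (D * (-a)) * D * ‖x‖ := by linarith [hsum_v]
        _ = CK * ‖x‖ := by rw [hCK_def]; ring
    have hfinal : ‖s‖ * (1 - r) ≤ CK := by
      have h1 : ‖s‖ * (1 - r) * ‖x‖ ≤ CK * ‖x‖ := le_trans hu_lower (huv ▸ hv_upper)
      exact le_of_mul_le_mul_right h1 hx0'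
    have : ‖s‖ ≤ CK / (1 - r) := (le_div_iff₀ h1r).mpr hfinal
    rw [hM_def] at hsM
    linarith
  -- differentiability of F
  have hT_diff : Differentiable ℂ T := by
    have d1 : Differentiable ℂ (fun s : ℂ => s • ContinuousLinearMap.id ℂ (EuclideanSpace ℂ (Fin n))) :=
      differentiable_id.smul_const _
    have dA : Differentiable ℂ (fun _ : ℂ => A) := differentiable_const _
    have d2 : Differentiable ℂ (fun s : ℂ => ∑ ℓ : Fin L,
        (s * Complex.exp (-((((ℓ : ℕ) + 1 : ℕ) : ℂ) * (H : ℂ)) * s)) • Am ℓ) :=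
      Differentiable.fun_sum fun ℓ _ =>
        (differentiable_id.mul ((differentiable_id.const_mul _).cexp)).smul_const _
    have d3 : Differentiable ℂ (fun s : ℂ => ∑ j : Fin J,
        Complex.exp (-((((j : ℕ) + 1 : ℕ) : ℂ) * (H : ℂ)) * s) • Aj j) :=
      Differentiable.fun_sum fun j _ => ((differentiable_id.const_mul _).cexp).smul_const _
    have d4 : Differentiable ℂ (fun s : ℂ => g s • ContinuousLinearMap.id ℂ (EuclideanSpace ℂ (Fin n))) :=
      hg_diff.smul_const _
    rw [hT_def]
    exact (((d1.sub dA).add d2).sub d3).sub d4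
  have hFdiff : Differentiable ℂ F := by
    set b : Module.Basis (Fin n) ℂ (EuclideanSpace ℂ (Fin n)) := (EuclideanSpace.basisFun (Fin n) ℂ).toBasis with hb_def
    have hent : ∀ i j : Fin n, Differentiable ℂ
        (fun s => (LinearMap.toMatrix b b) ((T s : (EuclideanSpace ℂ (Fin n)) →L[ℂ] (EuclideanSpace ℂ (Fin n))) : (EuclideanSpace ℂ (Fin n)) →ₗ[ℂ] (EuclideanSpace ℂ (Fin n))) i j) := by
      intro i j
      have h1 : Differentiable ℂ (fun s => (T s) (b j)) :=
        hT_diff.clm_apply (differentiable_const _)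
      have h2 : Differentiable ℂ (fun s => b.equivFunL ((T s) (b j))) :=
        (b.equivFunL.toContinuousLinearMap.differentiable).comp h1
      have h3 : Differentiable ℂ (fun s => b.equivFunL ((T s) (b j)) i) :=
        differentiable_pi.mp h2 i
      convert h3 using 2 with s
      simp [LinearMap.toMatrix_apply, Module.Basis.equivFunL_apply, Module.Basis.equivFun_apply]
    have hF_eq : F = fun s => ∑ σ : Equiv.Perm (Fin n),
        (Equiv.Perm.sign σ : ℂ) *
          ∏ i, (LinearMap.toMatrix b b) ((T s : (EuclideanSpace ℂ (Fin n)) →L[ℂ] (EuclideanSpace ℂ (Fin n))) : (EuclideanSpace ℂ (Fin n)) →ₗ[ℂ] (EuclideanSpace ℂ (Fin n))) (σ i) i := by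
      funext s
      rw [hFT s, ← LinearMap.det_toMatrix b, Matrix.det_apply']
    rw [hF_eq]
    apply Differentiable.fun_sum
    intro σ _
    apply Differentiable.const_mul
    intro s
    exact DifferentiableAt.fun_finsetProd fun i _ => (hent (σ i) i).differentiableAt
  -- conclusion
  refine ⟨a, ha0, ?_⟩
  set S : Set ℂ := {s : ℂ | a < s.re ∧ F s = 0} with hS_def
  have hsub : S ⊆ Metric.closedBall (0:ℂ) M := by
    intro s hs
    rw [Metric.mem_closedBall, dist_zero_right]
    by_contra hlt
    exact hbig s hs.1.le (lt_of_not_ge hlt) hs.2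
  by_contra hfin
  have hinf : S.Infinite := hfin
  obtain ⟨z, hzK, hz⟩ := hinf.exists_accPt_of_subset_isCompact
    (isCompact_closedBall (0:ℂ) M) hsub
  have hfreq : ∃ᶠ w in nhdsWithin z {z}ᶜ, F w = 0 := by
    rw [accPt_iff_frequently] at hz
    rw [frequently_nhdsWithin_iff]
    exact hz.mono fun w hw => ⟨hw.2.2, hw.1⟩
  have hFanal : AnalyticOnNhd ℂ F Set.univ :=
    hFdiff.differentiableOn.analyticOnNhd isOpen_univ
  have hzero : Set.EqOn F 0 Set.univ :=
    hFanal.eqOn_zero_of_preconnected_of_frequently_eq_zero isPreconnected_univ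
      (Set.mem_univ z) hfreq
  have hne : F ((M + 1 : ℝ) : ℂ) ≠ 0 := by
    apply hbig
    · rw [Complex.ofReal_re]; linarith
    · rw [Complex.norm_real, Real.norm_eq_abs, abs_of_pos (by linarith : (0:ℝ) < M + 1)]; linarith
  exact hne (hzero (Set.mem_univ _))
end

section
/- (Stability of the elementary delay system used in Section 5.) For every real h with 0 ≤ h < π/2 and every s ∈ ℂ with Re s ≥ 0, one has s + e^{−h s} ≠ 0. In other words, the characteristic function of the delay system ẋ(t) + x(t−h) = u(t) has no zeros in the closed right half-plane when 0 ≤ h < π/2. -/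
/-- (Stability of the elementary delay system used in Section 5.)
For every real `h` with `0 ≤ h < π/2` and every `s ∈ ℂ` with `Re s ≥ 0`,
one has `s + e^{−h s} ≠ 0`. -/
theorem stmt_14 (h : ℝ) (hh0 : 0 ≤ h) (hhlt : h < Real.pi / 2)
    (s : ℂ) (hs : 0 ≤ s.re) :
    s + Complex.exp (-(h : ℂ) * s) ≠ 0 := by
  intro heq
  have hsval : s = -Complex.exp (-(h : ℂ) * s) := by linear_combination heq
  have hre : (-(h : ℂ) * s).re = -(h * s.re) := by simp [Complex.mul_re]
  have him : (-(h : ℂ) * s).im = -(h * s.im) := by simp [Complex.mul_im]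
  have habs : ‖s‖ = Real.exp (-(h * s.re)) := by
    conv_lhs => rw [hsval]
    rw [norm_neg, Complex.norm_exp, hre]
  have habs1 : ‖s‖ ≤ 1 := by
    rw [habs]
    exact Real.exp_le_one_iff.mpr (by nlinarith)
  have hy1 : |s.im| ≤ 1 := le_trans (Complex.abs_im_le_norm s) habs1
  have hhy : |h * s.im| < Real.pi / 2 := by
    rw [abs_mul, abs_of_nonneg hh0]
    calc h * |s.im| ≤ h * 1 := by nlinarith
      _ < Real.pi / 2 := by linarith
  have hcos : 0 < Real.cos (h * s.im) :=
    Real.cos_pos_of_mem_Ioo ⟨by linarith [abs_lt.mp hhy |>.1], (abs_lt.mp hhy).2⟩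
  have hx : s.re = -(Real.exp (-(h * s.re)) * Real.cos (h * s.im)) := by
    conv_lhs => rw [hsval]
    rw [Complex.neg_re, Complex.exp_re, hre, him, Real.cos_neg]
  nlinarith [Real.exp_pos (-(h * s.re))]
end

section
/- (Stability of the closed loop in the example of Section 5.) For every s ∈ ℂ with Re s ≥ 0, one has s + 1 + e^{−2s} ≠ 0. Consequently the constant feedback controller K = −1 applied to the (unstable) delay system ẋ(t) + x(t−2) = u(t) yields a closed-loop characteristic function with no zeros in the closed right half-plane. -/
/-- (Stability of the closed loop in the example of Section 5.)
For every `s ∈ ℂ` with `Re s ≥ 0`, one has `s + 1 + e^{−2s} ≠ 0`. -/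
theorem stmt_15 (s : ℂ) (hs : 0 ≤ s.re) :
    s + 1 + Complex.exp (-2 * s) ≠ 0 := by
  intro h
  have heq : Complex.exp (-2 * s) = -(s + 1) := by linear_combination h
  have habs : ‖Complex.exp (-2 * s)‖ = ‖s + 1‖ := by
    rw [heq, norm_neg]
  rw [Complex.norm_exp] at habs
  have hre : (-2 * s).re = -2 * s.re := by simp
  rw [hre] at habs
  have h1 : Real.exp (-2 * s.re) ≤ 1 := by
    rw [Real.exp_le_one_iff]
    linarith
  have h2 : s.re + 1 ≤ ‖s + 1‖ := by
    calc s.re + 1 = (s + 1).re := by simp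
    _ ≤ |(s + 1).re| := le_abs_self _
    _ ≤ ‖s + 1‖ := Complex.abs_re_le_norm _
  have hre0 : s.re = 0 := by linarith
  have habs1 : ‖s + 1‖ = 1 := by
    rw [← habs, hre0]; simp
  have hsq : (s + 1).re ^ 2 + (s + 1).im ^ 2 = 1 := by
    have := Complex.sq_norm (s + 1)
    rw [habs1, Complex.normSq_apply] at this
    nlinarith [this]
  have him0 : s.im = 0 := by
    simp [hre0] at hsq
    nlinarith [hsq]
  have hs0 : s = 0 := Complex.ext hre0 him0
  rw [hs0] at h
  simp [Complex.exp_zero] at h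
end
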